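/- There is no finite set 𝔉 of finite simple graphs such that a finite simple graph is total threshold colorable if and only if it contains no subgraph isomorphic to a member of 𝔉. -/

import Mathlib

/-- An `(r,t)`-threshold-coloring of the graph `G` with respect to the near-far-labeling
`(N, G.edgeSet \ N)`: a coloring with colors `{0, …, r-1}` such that the colors of the
endvertices of each near edge differ by at most `t`, and the colors of the endvertices of
each far edge differ by more than `t`. -/
def IsThresholdColoring {V : Type*} (G : SimpleGraph V) (N : Set (Sym2 V))
    (r t : ℕ) (c : V → ℕ) : Prop :=
  (∀ v, c v < r) ∧
  (∀ ⦃u v⦄, G.Adj u v → s(u, v) ∈ N → |(c u : ℤ) - (c v : ℤ)| ≤ (t : ℤ)) ∧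
  (∀ ⦃u v⦄, G.Adj u v → s(u, v) ∉ N → (t : ℤ) < |(c u : ℤ) - (c v : ℤ)|)

/-- A graph is total threshold colorable if there are integers `r ≥ t ≥ 0` such that for
every subset `N` of its edge set there is an `(r,t)`-threshold-coloring with respect to
the near-far-labeling `(N, E \ N)`. -/
def TotalThresholdColorable {V : Type*} (G : SimpleGraph V) : Prop :=
  ∃ r t : ℕ, t ≤ r ∧ ∀ N ⊆ G.edgeSet, ∃ c : V → ℕ, IsThresholdColoring G N r t c

/-- There is no finite set `𝔉` of finite simple graphs such that a finite simple graph is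
total threshold colorable if and only if it contains no subgraph isomorphic to a member
of `𝔉` (subgraph containment being expressed by an injective graph homomorphism). -/
-- parity alternation lemma
lemma no_alternation {m : ℕ} (hm : Odd m) (b : ZMod m → Bool)
    (h : ∀ i : ZMod m, b (i + 1) = ! b i) : False := by
  have key : ∀ n : ℕ, b (n : ZMod m) = (if Even n then b 0 else !b 0) := by
    intro n
    induction n with
    | zero => simp
    | succ n ih =>
      have : ((n + 1 : ℕ) : ZMod m) = (n : ZMod m) + 1 := by push_cast; ring
      rw [this, h, ih]
      by_cases he : Even n
      · simp [he, Nat.even_add_one]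
      · simp [he, Nat.even_add_one]
  have h2 := key m
  rw [ZMod.natCast_self] at h2
  rw [if_neg (by simpa using hm)] at h2
  exact (Bool.eq_not_self _).mp h2

-- monotonicity under injective homomorphisms
lemma mono {V W : Type*} {H : SimpleGraph V} {G : SimpleGraph W}
    (f : H →g G) (hf : Function.Injective f) (h : TotalThresholdColorable G) :
    TotalThresholdColorable H := by
  obtain ⟨r, t, htr, hc⟩ := h
  refine ⟨r, t, htr, fun N hN => ?_⟩
  have hsub : Sym2.map f '' N ⊆ G.edgeSet := by
    rintro e ⟨e', he', rfl⟩
    exact f.map_mem_edgeSet (hN he')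
  obtain ⟨c, hcr, hnear, hfar⟩ := hc (Sym2.map f '' N) hsub
  refine ⟨c ∘ f, fun v => hcr _, ?_, ?_⟩
  · intro u v huv hmem
    exact hnear (f.map_adj huv) ⟨s(u, v), hmem, Sym2.map_pair_eq f u v⟩
  · intro u v huv hmem
    refine hfar (f.map_adj huv) ?_
    rintro ⟨e, he, hee⟩
    have : e = s(u, v) := Sym2.map.injective hf (by rw [hee, Sym2.map_pair_eq])
    exact hmem (this ▸ he)

-- the wheel graph: hub `none`, rim `some i` with a cycle structure
def wheel (m : ℕ) : SimpleGraph (Option (ZMod m)) :=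
  SimpleGraph.fromRel (fun x y => x = none ∨ ∃ i : ZMod m, x = some i ∧ y = some (i + 1))

def puncture {V : Type*} (G : SimpleGraph V) (v : V) : SimpleGraph V where
  Adj x y := G.Adj x y ∧ x ≠ v ∧ y ≠ v
  symm := ⟨fun x y ⟨h, hx, hy⟩ => ⟨h.symm, hy, hx⟩⟩
  loopless := ⟨fun x ⟨h, _, _⟩ => G.ne_of_adj h rfl⟩

lemma wheel_adj_hub {m : ℕ} (i : ZMod m) : (wheel m).Adj none (some i) := by
  refine ⟨by simp, Or.inl (Or.inl rfl)⟩

lemma zsucc_ne_self {m : ℕ} (hm3 : 3 ≤ m) (i : ZMod m) : i + 1 ≠ i := by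
  haveI : Fact (1 < m) := ⟨by omega⟩
  intro h
  exact one_ne_zero (left_eq_add.mp h.symm)

lemma wheel_adj_rim {m : ℕ} (hm3 : 3 ≤ m) (i : ZMod m) :
    (wheel m).Adj (some i) (some (i + 1)) := by
  refine ⟨?_, Or.inl (Or.inr ⟨i, rfl, rfl⟩)⟩
  simp only [ne_eq, Option.some.injEq]
  exact fun h => zsucc_ne_self hm3 i h.symm

lemma wheel_adj_cases {m : ℕ} {u v : Option (ZMod m)} (h : (wheel m).Adj u v) :
    (u = none ∧ ∃ i, v = some i) ∨ ((∃ i, u = some i) ∧ v = none) ∨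
    (∃ i, u = some i ∧ v = some (i + 1)) ∨ (∃ i, v = some i ∧ u = some (i + 1)) := by
  obtain ⟨hne, hrel⟩ := h
  rcases hrel with (h | ⟨i, hi, hi1⟩) | (h | ⟨i, hi, hi1⟩)
  · subst h
    rcases v with _ | j
    · exact absurd rfl hne
    · exact Or.inl ⟨rfl, j, rfl⟩
  · exact Or.inr (Or.inr (Or.inl ⟨i, hi, hi1⟩))
  · subst h
    rcases u with _ | j
    · exact absurd rfl hne
    · exact Or.inr (Or.inl ⟨⟨j, rfl⟩, rfl⟩)
  · exact Or.inr (Or.inr (Or.inr ⟨i, hi, hi1⟩))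

lemma wheel_not_colorable {m : ℕ} (hm : Odd m) (hm3 : 3 ≤ m) :
    ¬ TotalThresholdColorable (wheel m) := by
  haveI : NeZero m := ⟨by omega⟩
  rintro ⟨r, t, -, hc⟩
  obtain ⟨c, -, hnear, hfar⟩ := hc ((wheel m).edgeSet ∩ {e | none ∈ e})
    Set.inter_subset_left
  set y : ZMod m → ℤ := fun i => (c (some i) : ℤ) - (c none : ℤ) with hy
  have hspoke : ∀ i, |y i| ≤ (t : ℤ) := by
    intro i
    have h1 := hnear (wheel_adj_hub i)
      ⟨(wheel m).mem_edgeSet.mpr (wheel_adj_hub i), by simp⟩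
    rw [abs_sub_comm] at h1
    exact h1
  have hrim : ∀ i, (t : ℤ) < |y i - y (i + 1)| := by
    intro i
    have h1 := hfar (wheel_adj_rim hm3 i) (fun hmem => by simpa using hmem.2)
    have h2 : (c (some i) : ℤ) - (c (some (i + 1)) : ℤ) = y i - y (i + 1) := by
      simp only [hy]; ring
    rwa [h2] at h1
  apply no_alternation hm (fun i => decide (0 ≤ y i))
  intro i
  have h1 := hspoke i
  have h2 := hspoke (i + 1)
  have h3 := hrim i
  rw [abs_le] at h1 h2
  have hiff : (0 ≤ y (i + 1)) ↔ ¬ (0 ≤ y i) := by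
    rcases lt_abs.mp h3 with h | h <;> constructor <;> intro <;> omega
  by_cases hp : 0 ≤ y i
  · simp only [hp, decide_eq_true_eq]
    simp [show y (i + 1) < 0 by by_contra hq; exact (hiff.mp (by omega)) hp]
  · simp only [hp]
    simp [hiff.mpr hp, hp]

-- the "side" sequence determined by a sequence of far/near bits
def sideSeq (d : ℕ → Bool) : ℕ → Bool
  | 0 => false
  | s + 1 => if s = 0 then false else xor (sideSeq d s) (d s)

lemma sideSeq_succ (d : ℕ → Bool) {s : ℕ} (hs : s ≠ 0) :
    sideSeq d (s + 1) = xor (sideSeq d s) (d s) := by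
  rw [sideSeq, if_neg hs]

lemma val_succ {m : ℕ} (hm3 : 3 ≤ m) {a : ZMod m} (h : a + 1 ≠ 0) :
    (a + 1).val = a.val + 1 := by
  haveI : NeZero m := ⟨by omega⟩
  haveI : Fact (1 < m) := ⟨by omega⟩
  have h1 : a.val + 1 ≠ m := by
    intro he
    apply h
    have h2 : ((a.val + 1 : ℕ) : ZMod m) = 0 := by rw [he]; exact ZMod.natCast_self m
    rwa [Nat.cast_add, Nat.cast_one, ZMod.natCast_zmod_val] at h2
  have h2 : a.val < m := ZMod.val_lt a
  rw [ZMod.val_add, ZMod.val_one, Nat.mod_eq_of_lt (by omega)]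

lemma puncture_adj {V : Type*} (G : SimpleGraph V) (v x y : V) :
    (puncture G v).Adj x y ↔ G.Adj x y ∧ x ≠ v ∧ y ≠ v := Iff.rfl

lemma puncture_hub_colorable {m : ℕ} (hm : Odd m) (hm3 : 3 ≤ m) :
    TotalThresholdColorable (puncture (wheel m) none) := by
  classical
  haveI : NeZero m := ⟨by omega⟩
  haveI : Fact (1 < m) := ⟨by omega⟩
  refine ⟨9, 2, by norm_num, fun N hN => ?_⟩
  have hjex : ∃ j : ZMod m,
      ((s(some (j - 1), some j) ∈ N) ↔ (s(some j, some (j + 1)) ∈ N)) := by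
    by_contra hno
    push_neg at hno
    apply no_alternation hm (fun i => decide (s(some i, some (i + 1)) ∈ N))
    intro i
    have h := hno (i + 1)
    rw [add_sub_cancel_right] at h
    by_cases h1 : s(some i, some (i + 1)) ∈ N <;>
      by_cases h2 : s(some (i + 1), some (i + 1 + 1)) ∈ N <;>
      simp [h1, h2] at h ⊢
  obtain ⟨j, hj⟩ := hjex
  set d : ℕ → Bool :=
    fun s => decide (s(some (j + (s : ZMod m)), some (j + (s : ZMod m) + 1)) ∉ N) with hd
  set g := sideSeq d with hg
  set c : Option (ZMod m) → ℕ := fun x =>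
    match x with
    | none => 0
    | some x => if x = j then (if s(some j, some (j + 1)) ∈ N then 2 else 6)
        else (if g ((x - j).val) then 3 else 0) with hc
  have hc_none : c none = 0 := rfl
  have hc_some : ∀ x : ZMod m, c (some x) =
      if x = j then (if s(some j, some (j + 1)) ∈ N then 2 else 6)
      else (if g ((x - j).val) then 3 else 0) := fun _ => rfl
  have bound : ∀ v, c v < 9 := by
    intro v
    rcases v with _ | x
    · rw [hc_none]; norm_num
    · rw [hc_some]; split_ifs <;> norm_num
  have key : ∀ x : ZMod m,
      ((s(some x, some (x + 1)) ∈ N → |(c (some x) : ℤ) - (c (some (x + 1)) : ℤ)| ≤ 2) ∧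
       (s(some x, some (x + 1)) ∉ N → 2 < |(c (some x) : ℤ) - (c (some (x + 1)) : ℤ)|)) := by
    intro x
    by_cases hx : x = j
    · subst hx
      have hne : x + 1 ≠ x := zsucc_ne_self hm3 x
      have hcx1 : c (some (x + 1)) = 0 := by
        rw [hc_some, if_neg hne, add_sub_cancel_left, ZMod.val_one,
          show g 1 = false from rfl, if_neg (by simp)]
      constructor <;> intro hmem
      · rw [hc_some, if_pos rfl, if_pos hmem, hcx1]; norm_num
      · rw [hc_some, if_pos rfl, if_neg hmem, hcx1]; norm_num
    · by_cases hx1 : x + 1 = j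
      · have hxe : x = j - 1 := eq_sub_of_add_eq hx1
        subst hxe
        rw [sub_add_cancel] at hx1 ⊢
        have hcj : c (some j) = if s(some j, some (j + 1)) ∈ N then 2 else 6 := by
          rw [hc_some, if_pos rfl]
        have hcx : c (some (j - 1)) = if g ((j - 1 - j).val) then 3 else 0 := by
          rw [hc_some, if_neg hx]
        constructor <;> intro hmem
        · rw [hcx, hcj, if_pos (hj.mp hmem)]
          cases g ((j - 1 - j).val) <;> norm_num
        · rw [hcx, hcj, if_neg (fun h => hmem (hj.mpr h))]
          cases g ((j - 1 - j).val) <;> norm_num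
      · have ha : x - j ≠ 0 := sub_ne_zero.mpr hx
        have hb : x - j + 1 ≠ 0 := by
          rw [show x - j + 1 = x + 1 - j by ring]
          exact sub_ne_zero.mpr hx1
        have hsne : (x - j).val ≠ 0 := fun h => ha ((ZMod.val_eq_zero _).mp h)
        have hval1 : (x + 1 - j).val = (x - j).val + 1 := by
          rw [show x + 1 - j = (x - j) + 1 by ring, val_succ hm3 hb]
        have hcast : (((x - j).val : ℕ) : ZMod m) = x - j := ZMod.natCast_zmod_val _
        have e1 : j + (((x - j).val : ℕ) : ZMod m) = x := by rw [hcast]; ring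
        have hds : d ((x - j).val) = decide (s(some x, some (x + 1)) ∉ N) := by
          rw [hd]
          simp only
          rw [e1]
        have hgs : g ((x - j).val + 1) = xor (g ((x - j).val)) (d ((x - j).val)) := by
          rw [hg]; exact sideSeq_succ d hsne
        have hcx : c (some x) = if g ((x - j).val) then 3 else 0 := by
          rw [hc_some, if_neg hx]
        have hcx1 : c (some (x + 1)) = if g ((x - j).val + 1) then 3 else 0 := by
          rw [hc_some, if_neg hx1, hval1]
        constructor <;> intro hmem
        · have hdf : d ((x - j).val) = false := by rw [hds]; simp [hmem]
          rw [hcx, hcx1, hgs, hdf]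
          cases g ((x - j).val) <;> norm_num
        · have hdt : d ((x - j).val) = true := by rw [hds]; simp [hmem]
          rw [hcx, hcx1, hgs, hdt]
          cases g ((x - j).val) <;> norm_num
  refine ⟨c, bound, ?_, ?_⟩
  · intro u v huv hmem
    obtain ⟨hadj, hu, hv⟩ := (puncture_adj _ _ _ _).mp huv
    rcases wheel_adj_cases hadj with ⟨rfl, -⟩ | ⟨-, rfl⟩ | ⟨i, rfl, rfl⟩ | ⟨i, rfl, rfl⟩
    · exact absurd rfl hu
    · exact absurd rfl hv
    · exact (key i).1 hmem
    · rw [abs_sub_comm]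
      exact (key i).1 (by rwa [Sym2.eq_swap] at hmem)
  · intro u v huv hmem
    obtain ⟨hadj, hu, hv⟩ := (puncture_adj _ _ _ _).mp huv
    rcases wheel_adj_cases hadj with ⟨rfl, -⟩ | ⟨-, rfl⟩ | ⟨i, rfl, rfl⟩ | ⟨i, rfl, rfl⟩
    · exact absurd rfl hu
    · exact absurd rfl hv
    · exact (key i).2 hmem
    · rw [abs_sub_comm]
      exact (key i).2 (by rwa [Sym2.eq_swap] at hmem)

lemma puncture_rim_colorable {m : ℕ} (hm3 : 3 ≤ m) (p : ZMod m) :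
    TotalThresholdColorable (puncture (wheel m) (some p)) := by
  classical
  haveI : NeZero m := ⟨by omega⟩
  haveI : Fact (1 < m) := ⟨by omega⟩
  refine ⟨9, 2, by norm_num, fun N hN => ?_⟩
  set d : ℕ → Bool :=
    fun s => decide (s(some (p + (s : ZMod m)), some (p + (s : ZMod m) + 1)) ∉ N) with hd
  set g := sideSeq d with hg
  set c : Option (ZMod m) → ℕ := fun x =>
    match x with
    | none => 5
    | some x => if x = p then 0
        else if s(none, some x) ∈ N then (if g ((x - p).val) then 7 else 3)
        else (if g ((x - p).val) then 8 else 2) with hc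
  have hc_none : c none = 5 := rfl
  have hc_some : ∀ x : ZMod m, c (some x) =
      if x = p then 0
      else if s(none, some x) ∈ N then (if g ((x - p).val) then 7 else 3)
      else (if g ((x - p).val) then 8 else 2) := fun _ => rfl
  have bound : ∀ v, c v < 9 := by
    intro v
    rcases v with _ | x
    · rw [hc_none]; norm_num
    · rw [hc_some]; split_ifs <;> norm_num
  -- spoke edges
  have spoke : ∀ x : ZMod m, x ≠ p →
      ((s(none, some x) ∈ N → |(c none : ℤ) - (c (some x) : ℤ)| ≤ 2) ∧
       (s(none, some x) ∉ N → 2 < |(c none : ℤ) - (c (some x) : ℤ)|)) := by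
    intro x hx
    constructor <;> intro hmem
    · rw [hc_none, hc_some, if_neg hx, if_pos hmem]
      cases g ((x - p).val) <;> norm_num
    · rw [hc_none, hc_some, if_neg hx, if_neg hmem]
      cases g ((x - p).val) <;> norm_num
  -- rim edges
  have key : ∀ x : ZMod m, x ≠ p → x + 1 ≠ p →
      ((s(some x, some (x + 1)) ∈ N → |(c (some x) : ℤ) - (c (some (x + 1)) : ℤ)| ≤ 2) ∧
       (s(some x, some (x + 1)) ∉ N → 2 < |(c (some x) : ℤ) - (c (some (x + 1)) : ℤ)|)) := by
    intro x hx hx1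
    have ha : x - p ≠ 0 := sub_ne_zero.mpr hx
    have hb : x - p + 1 ≠ 0 := by
      rw [show x - p + 1 = x + 1 - p by ring]
      exact sub_ne_zero.mpr hx1
    have hsne : (x - p).val ≠ 0 := fun h => ha ((ZMod.val_eq_zero _).mp h)
    have hval1 : (x + 1 - p).val = (x - p).val + 1 := by
      rw [show x + 1 - p = (x - p) + 1 by ring, val_succ hm3 hb]
    have hcast : (((x - p).val : ℕ) : ZMod m) = x - p := ZMod.natCast_zmod_val _
    have e1 : p + (((x - p).val : ℕ) : ZMod m) = x := by rw [hcast]; ring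
    have hds : d ((x - p).val) = decide (s(some x, some (x + 1)) ∉ N) := by
      rw [hd]
      simp only
      rw [e1]
    have hgs : g ((x - p).val + 1) = xor (g ((x - p).val)) (d ((x - p).val)) := by
      rw [hg]; exact sideSeq_succ d hsne
    have hcx : c (some x) =
        if s(none, some x) ∈ N then (if g ((x - p).val) then 7 else 3)
        else (if g ((x - p).val) then 8 else 2) := by
      rw [hc_some, if_neg hx]
    have hcx1 : c (some (x + 1)) =
        if s(none, some (x + 1)) ∈ N then (if g ((x - p).val + 1) then 7 else 3)
        else (if g ((x - p).val + 1) then 8 else 2) := by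
      rw [hc_some, if_neg hx1, hval1]
    constructor <;> intro hmem
    · have hdf : d ((x - p).val) = false := by rw [hds]; simp [hmem]
      rw [hcx, hcx1, hgs, hdf]
      by_cases h1 : s(none, some x) ∈ N <;> by_cases h2 : s(none, some (x + 1)) ∈ N <;>
        cases g ((x - p).val) <;> simp [h1, h2]
    · have hdt : d ((x - p).val) = true := by rw [hds]; simp [hmem]
      rw [hcx, hcx1, hgs, hdt]
      by_cases h1 : s(none, some x) ∈ N <;> by_cases h2 : s(none, some (x + 1)) ∈ N <;>
        cases g ((x - p).val) <;> simp [h1, h2]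
  refine ⟨c, bound, ?_, ?_⟩
  · intro u v huv hmem
    obtain ⟨hadj, hu, hv⟩ := (puncture_adj _ _ _ _).mp huv
    rcases wheel_adj_cases hadj with ⟨rfl, i, rfl⟩ | ⟨⟨i, rfl⟩, rfl⟩ | ⟨i, rfl, rfl⟩ | ⟨i, rfl, rfl⟩
    · exact (spoke i (fun h => hv (by rw [h]))).1 hmem
    · rw [abs_sub_comm]
      exact (spoke i (fun h => hu (by rw [h]))).1 (by rwa [Sym2.eq_swap] at hmem)
    · exact (key i (fun h => hu (by rw [h])) (fun h => hv (by rw [h]))).1 hmem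
    · rw [abs_sub_comm]
      exact (key i (fun h => hv (by rw [h])) (fun h => hu (by rw [h]))).1
        (by rwa [Sym2.eq_swap] at hmem)
  · intro u v huv hmem
    obtain ⟨hadj, hu, hv⟩ := (puncture_adj _ _ _ _).mp huv
    rcases wheel_adj_cases hadj with ⟨rfl, i, rfl⟩ | ⟨⟨i, rfl⟩, rfl⟩ | ⟨i, rfl, rfl⟩ | ⟨i, rfl, rfl⟩
    · exact (spoke i (fun h => hv (by rw [h]))).2 hmem
    · rw [abs_sub_comm]
      exact (spoke i (fun h => hu (by rw [h]))).2 (by rwa [Sym2.eq_swap] at hmem)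
    · exact (key i (fun h => hu (by rw [h])) (fun h => hv (by rw [h]))).2 hmem
    · rw [abs_sub_comm]
      exact (key i (fun h => hv (by rw [h])) (fun h => hu (by rw [h]))).2
        (by rwa [Sym2.eq_swap] at hmem)


theorem no_finite_forbidden_subgraph_characterization :
    ¬ ∃ (k : ℕ) (Vf : Fin k → Type) (Hf : (i : Fin k) → SimpleGraph (Vf i)),
        (∀ i, Finite (Vf i)) ∧
        ∀ (W : Type) (_ : Finite W) (G : SimpleGraph W),
          (TotalThresholdColorable G ↔
            ∀ i : Fin k, ¬ ∃ f : Hf i →g G, Function.Injective f) := by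
  classical
  rintro ⟨k, Vf, Hf, hfin, hchar⟩
  set B := (Finset.univ : Finset (Fin k)).sup (fun i => Nat.card (Vf i)) with hB
  set m := 2 * B + 3 with hm
  have hodd : Odd m := ⟨B + 1, by omega⟩
  have hm3 : 3 ≤ m := by omega
  haveI : NeZero m := ⟨by omega⟩
  have hW : ¬ TotalThresholdColorable (wheel m) := wheel_not_colorable hodd hm3
  have h2 : ¬ ∀ i : Fin k, ¬ ∃ f : Hf i →g wheel m, Function.Injective f :=
    fun h => hW ((hchar (Option (ZMod m)) inferInstance (wheel m)).mpr h)
  push_neg at h2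
  obtain ⟨i, f, hf⟩ := h2
  haveI := hfin i
  -- each forbidden graph is itself not colorable
  have hnc : ¬ TotalThresholdColorable (Hf i) := by
    intro h
    exact (hchar (Vf i) (hfin i) (Hf i)).mp h i ⟨SimpleGraph.Hom.id, fun a b h => h⟩
  -- f is not surjective
  have hcard : Nat.card (Vf i) < Nat.card (Option (ZMod m)) := by
    have hle : Nat.card (Vf i) ≤ B := Finset.le_sup (f := fun i => Nat.card (Vf i)) (Finset.mem_univ i)
    have hcardo : Nat.card (Option (ZMod m)) = m + 1 := by
      rw [Finite.card_option, Nat.card_zmod]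
    omega
  have hnsurj : ¬ Function.Surjective f :=
    fun hs => absurd (Nat.card_le_card_of_surjective f hs) (by omega)
  obtain ⟨v, hv⟩ := not_forall.mp hnsurj
  have hv' : ∀ a, f a ≠ v := fun a h => hv ⟨a, h⟩
  -- map into the punctured wheel
  let f' : Hf i →g puncture (wheel m) v :=
    ⟨f, fun hadj => ⟨f.map_adj hadj, hv' _, hv' _⟩⟩
  have hpc : TotalThresholdColorable (puncture (wheel m) v) := by
    rcases v with _ | p
    · exact puncture_hub_colorable hodd hm3
    · exact puncture_rim_colorable hm3 p
  exact hnc (mono f' hf hpc)
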